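/- Under Assumptions (A) and (B), for every r > 0 there exist constants C_r > 0, c_r > 0 and λ_r > 0 such that for every λ ∈ (0, λ_r], ∫_{{y : ‖y − x*‖ ≥ r}} π_λ(y) dy ≤ C_r e^{−c_r/λ}. In particular, the probability measures π_λ(y) dy converge narrowly to the Dirac mass δ_{x*} as λ ↓ 0. -/

import Mathlib

open MeasureTheory Real Filter Topology
open scoped RealInnerProductSpace

noncomputable section

/-- The heat kernel with diffusivity `β`: `G_r(z) = (4πβr)^(−d/2) exp(−‖z‖²/(4βr))`. -/
def heatK {d : ℕ} (β r : ℝ) (z : EuclideanSpace ℝ (Fin d)) : ℝ :=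
  (4 * π * β * r) ^ (-(d : ℝ) / 2) * Real.exp (-‖z‖ ^ 2 / (4 * β * r))

/-- The Laplacian of a scalar function on `ℝ^d`. -/
def lap {d : ℕ} (g : EuclideanSpace ℝ (Fin d) → ℝ) (x : EuclideanSpace ℝ (Fin d)) : ℝ :=
  ∑ i : Fin d,
    fderiv ℝ (fun z => fderiv ℝ g z (EuclideanSpace.single i 1)) x (EuclideanSpace.single i 1)

/-- The normalized Gibbs density `π_λ(y) = e^{−α_λ f(y)} / M_λ`, with `α_λ = T/(2λβ)`. -/
def gibbsDen {d : ℕ} (T β lam : ℝ) (f : EuclideanSpace ℝ (Fin d) → ℝ)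
    (y : EuclideanSpace ℝ (Fin d)) : ℝ :=
  Real.exp (-(T / (2 * lam * β)) * f y) / ∫ z, Real.exp (-(T / (2 * lam * β)) * f z)

/-- `h_λ(t,x) = ∫ G_{T−t}(x−y) π_λ(y) dy`. -/
def hHC {d : ℕ} (T β lam : ℝ) (f : EuclideanSpace ℝ (Fin d) → ℝ) (t : ℝ)
    (x : EuclideanSpace ℝ (Fin d)) : ℝ :=
  ∫ y, heatK β (T - t) (x - y) * gibbsDen T β lam f y

/-- The conditional terminal density `η_{λ,t,x}(y) = G_{T−t}(x−y) π_λ(y) / h_λ(t,x)`. -/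
def etaHC {d : ℕ} (T β lam : ℝ) (f : EuclideanSpace ℝ (Fin d) → ℝ) (t : ℝ)
    (x y : EuclideanSpace ℝ (Fin d)) : ℝ :=
  heatK β (T - t) (x - y) * gibbsDen T β lam f y / hHC T β lam f t x

/-- The barycenter `a_λ(t,x) = ∫ y η_{λ,t,x}(y) dy`. -/
def aHC {d : ℕ} (T β lam : ℝ) (f : EuclideanSpace ℝ (Fin d) → ℝ) (t : ℝ)
    (x : EuclideanSpace ℝ (Fin d)) : EuclideanSpace ℝ (Fin d) :=
  ∫ y, etaHC T β lam f t x y • y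

/-- The optimal drift `u*_λ(t,x) = 2β ∇_x log h_λ(t,x)`. -/
def uHC {d : ℕ} (T β lam : ℝ) (f : EuclideanSpace ℝ (Fin d) → ℝ) (t : ℝ)
    (x : EuclideanSpace ℝ (Fin d)) : EuclideanSpace ℝ (Fin d) :=
  (2 * β) • gradient (fun z => Real.log (hHC T β lam f t z)) x

/-- The potential `Φ_λ(t,x) = −2β log h_λ(t,x)`. -/
def PhiHC {d : ℕ} (T β lam : ℝ) (f : EuclideanSpace ℝ (Fin d) → ℝ) (t : ℝ)
    (x : EuclideanSpace ℝ (Fin d)) : ℝ :=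
  -(2 * β) * Real.log (hHC T β lam f t x)

/-- The value function `V_λ(t,x) = −(2λβ/T) log h_λ(t,x) − (2λβ/T) log M_λ`. -/
def VHC {d : ℕ} (T β lam : ℝ) (f : EuclideanSpace ℝ (Fin d) → ℝ) (t : ℝ)
    (x : EuclideanSpace ℝ (Fin d)) : ℝ :=
  -(2 * lam * β / T) * Real.log (hHC T β lam f t x)
    - (2 * lam * β / T) * Real.log (∫ z, Real.exp (-(T / (2 * lam * β)) * f z))

private lemma exp_integral_pos {d : ℕ} {f : EuclideanSpace ℝ (Fin d) → ℝ} {a : ℝ}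
    (hI : Integrable (fun y => Real.exp (-a * f y))) :
    0 < ∫ y, Real.exp (-a * f y) := by
  rw [integral_pos_iff_support_of_nonneg (fun y => (Real.exp_pos _).le) hI]
  have h : Function.support (fun y : EuclideanSpace ℝ (Fin d) => Real.exp (-a * f y))
      = Set.univ := by
    ext y; simp [Function.mem_support, (Real.exp_pos _).ne']
  rw [h]
  exact IsOpen.measure_pos volume isOpen_univ ⟨0, trivial⟩

/-- The tail estimate (first half of the theorem), as a standalone lemma. -/
private lemma gibbs_tail {d : ℕ} (T β : ℝ) (hT : 0 < T) (hβ : 0 < β)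
    (f : EuclideanSpace ℝ (Fin d) → ℝ) (hfc : Continuous f)
    (hcoer : Tendsto f (cocompact (EuclideanSpace ℝ (Fin d))) atTop)
    (hint : ∀ c > 0, Integrable (fun y => Real.exp (-c * f y)))
    (xstar : EuclideanSpace ℝ (Fin d))
    (hmin : ∀ y, f xstar ≤ f y)
    (huniq : ∀ y, f y = f xstar → y = xstar)
    (r : ℝ) (hr : 0 < r) :
    ∃ C > 0, ∃ c > 0, ∃ lam₀ > 0, ∀ lam ∈ Set.Ioc (0:ℝ) lam₀,
      (∫ y in {y : EuclideanSpace ℝ (Fin d) | r ≤ ‖y - xstar‖}, gibbsDen T β lam f y)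
        ≤ C * Real.exp (-c / lam) := by
  set S := {y : EuclideanSpace ℝ (Fin d) | r ≤ ‖y - xstar‖} with hSdef
  have hSclosed : IsClosed S :=
    isClosed_le continuous_const ((continuous_id.sub continuous_const).norm)
  have hSm : MeasurableSet S := hSclosed.measurableSet
  -- Step 1: a gap δ on the tail set
  obtain ⟨δ, hδpos, hδ⟩ : ∃ δ > 0, ∀ y ∈ S, f xstar + δ ≤ f y := by
    obtain ⟨K, hK, hKf⟩ : ∃ K, IsCompact K ∧ ∀ y ∉ K, f xstar + 1 ≤ f y := by
      have h := hcoer.eventually (Filter.eventually_ge_atTop (f xstar + 1))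
      rw [Filter.hasBasis_cocompact.eventually_iff] at h
      obtain ⟨K, hK, h⟩ := h
      exact ⟨K, hK, fun y hy => h hy⟩
    have hKS : IsCompact (K ∩ S) := hK.inter_right hSclosed
    by_cases hne : (K ∩ S).Nonempty
    · obtain ⟨y₀, hy₀mem, hy₀min⟩ := hKS.exists_isMinOn hne hfc.continuousOn
      have h0 : f xstar < f y₀ := by
        rcases lt_or_eq_of_le (hmin y₀) with h | h
        · exact h
        · exfalso
          have hy0 : y₀ = xstar := huniq y₀ h.symm
          have : r ≤ ‖y₀ - xstar‖ := hy₀mem.2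
          rw [hy0, sub_self, norm_zero] at this
          linarith
      refine ⟨min 1 (f y₀ - f xstar), lt_min one_pos (sub_pos.2 h0), fun y hy => ?_⟩
      by_cases hyK : y ∈ K
      · have h1 : f y₀ ≤ f y := hy₀min (Set.mem_inter hyK hy)
        have h2 : min 1 (f y₀ - f xstar) ≤ f y₀ - f xstar := min_le_right _ _
        linarith
      · have := hKf y hyK
        have h2 : min 1 (f y₀ - f xstar) ≤ 1 := min_le_left _ _
        linarith
    · refine ⟨1, one_pos, fun y hy => ?_⟩
      have hyK : y ∉ K := fun h => hne ⟨y, h, hy⟩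
      exact hKf y hyK
  -- Step 2: a small ball where f is close to its minimum
  obtain ⟨ρ, hρpos, hρ⟩ : ∃ ρ > 0, ∀ y ∈ Metric.closedBall xstar ρ, f y ≤ f xstar + δ / 2 := by
    have h : ∀ᶠ y in 𝓝 xstar, f y ≤ f xstar + δ / 2 := by
      have h2 := Metric.tendsto_nhds.mp (hfc.tendsto xstar) (δ / 2) (half_pos hδpos)
      filter_upwards [h2] with y hy
      rw [Real.dist_eq] at hy
      have := abs_lt.mp hy
      linarith [this.2]
    obtain ⟨ρ, hρpos, hρ⟩ := Metric.nhds_basis_closedBall.eventually_iff.mp h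
    exact ⟨ρ, hρpos, fun y hy => hρ hy⟩
  set α₁ := T / (2 * β) with hα₁def
  have hα₁pos : 0 < α₁ := by positivity
  have hI₁ : Integrable (fun y => Real.exp (-α₁ * f y)) := hint α₁ hα₁pos
  set I₁ := ∫ y, Real.exp (-α₁ * f y) with hI₁def
  have hI₁pos : 0 < I₁ := exp_integral_pos hI₁
  set V := (volume (Metric.closedBall xstar ρ)).toReal with hVdef
  have hVpos : 0 < V :=
    ENNReal.toReal_pos (Metric.measure_closedBall_pos volume xstar hρpos).ne'
      measure_closedBall_lt_top.ne
  refine ⟨I₁ / V * Real.exp (α₁ * (f xstar + δ)), by positivity,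
    T * δ / (4 * β), by positivity, 1, one_pos, ?_⟩
  rintro lam ⟨hl0, hl1⟩
  set α := T / (2 * lam * β) with hαdef
  have hαpos : 0 < α := by positivity
  have hα₁le : α₁ ≤ α := by
    rw [hαdef, hα₁def]
    apply div_le_div_of_nonneg_left hT.le (by positivity)
    nlinarith
  have hIα : Integrable (fun y => Real.exp (-α * f y)) := hint α hαpos
  set M := ∫ z, Real.exp (-α * f z) with hMdef
  have hMpos : 0 < M := exp_integral_pos hIα
  -- lower bound on M
  have hMlb : V * Real.exp (-α * (f xstar + δ / 2)) ≤ M := by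
    have h1 : Real.exp (-α * (f xstar + δ / 2)) * V
        ≤ ∫ y in Metric.closedBall xstar ρ, Real.exp (-α * f y) := by
      apply setIntegral_ge_of_const_le_real Metric.isClosed_closedBall.measurableSet
        measure_closedBall_lt_top.ne
        (fun y hy => Real.exp_le_exp.2 (by
          have := hρ y hy
          nlinarith))
        hIα.integrableOn
    calc V * Real.exp (-α * (f xstar + δ / 2))
        = Real.exp (-α * (f xstar + δ / 2)) * V := mul_comm _ _
      _ ≤ ∫ y in Metric.closedBall xstar ρ, Real.exp (-α * f y) := h1
      _ ≤ M := setIntegral_le_integral hIα (Filter.Eventually.of_forall fun y => (Real.exp_pos _).le)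
  -- upper bound on the numerator
  have hnum : (∫ y in S, Real.exp (-α * f y))
      ≤ Real.exp (-(α - α₁) * (f xstar + δ)) * I₁ := by
    have hpw : ∀ y ∈ S, Real.exp (-α * f y)
        ≤ Real.exp (-(α - α₁) * (f xstar + δ)) * Real.exp (-α₁ * f y) := by
      intro y hy
      rw [← Real.exp_add]
      apply Real.exp_le_exp.2
      have h1 : f xstar + δ ≤ f y := hδ y hy
      nlinarith [sub_nonneg.2 hα₁le]
    calc (∫ y in S, Real.exp (-α * f y))
        ≤ ∫ y in S, Real.exp (-(α - α₁) * (f xstar + δ)) * Real.exp (-α₁ * f y) :=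
          setIntegral_mono_on hIα.integrableOn ((hI₁.const_mul _).integrableOn) hSm hpw
      _ = Real.exp (-(α - α₁) * (f xstar + δ)) * ∫ y in S, Real.exp (-α₁ * f y) :=
          integral_const_mul _ _
      _ ≤ Real.exp (-(α - α₁) * (f xstar + δ)) * I₁ := by
          apply mul_le_mul_of_nonneg_left _ (Real.exp_pos _).le
          exact setIntegral_le_integral hI₁ (Filter.Eventually.of_forall fun y => (Real.exp_pos _).le)
  -- put together
  have hgd : (∫ y in S, gibbsDen T β lam f y) = (∫ y in S, Real.exp (-α * f y)) / M := by
    simp only [gibbsDen, ← hαdef, ← hMdef]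
    rw [integral_div]
  rw [hgd]
  have hstep : (∫ y in S, Real.exp (-α * f y)) / M
      ≤ (Real.exp (-(α - α₁) * (f xstar + δ)) * I₁) / (V * Real.exp (-α * (f xstar + δ / 2))) :=
    div_le_div₀ (by positivity) hnum (by positivity) hMlb
  refine hstep.trans (le_of_eq ?_)
  have hexp : Real.exp (-(α - α₁) * (f xstar + δ)) / Real.exp (-α * (f xstar + δ / 2))
      = Real.exp (α₁ * (f xstar + δ)) * Real.exp (-(T * δ / (4 * β)) / lam) := by
    rw [← Real.exp_sub, ← Real.exp_add]
    congr 1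
    rw [hαdef, hα₁def]
    field_simp
    ring
  calc Real.exp (-(α - α₁) * (f xstar + δ)) * I₁ / (V * Real.exp (-α * (f xstar + δ / 2)))
      = I₁ * Real.exp (-(α - α₁) * (f xstar + δ)) / (V * Real.exp (-α * (f xstar + δ / 2))) := by
        ring
    _ = I₁ / V * (Real.exp (-(α - α₁) * (f xstar + δ)) / Real.exp (-α * (f xstar + δ / 2))) :=
        mul_div_mul_comm _ _ _ _
    _ = I₁ / V * (Real.exp (α₁ * (f xstar + δ)) * Real.exp (-(T * δ / (4 * β)) / lam)) := by
        rw [hexp]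
    _ = I₁ / V * Real.exp (α₁ * (f xstar + δ)) * Real.exp (-(T * δ / (4 * β)) / lam) := by
        ring

theorem gibbs_concentration (d : ℕ) (hd : 1 ≤ d) (T β : ℝ)
    (hT : 0 < T) (hβ : 0 < β)
    (f : EuclideanSpace ℝ (Fin d) → ℝ)
    (hf : ContDiff ℝ 2 f)
    (hbdd : BddBelow (Set.range f))
    (hcoer : Tendsto f (cocompact (EuclideanSpace ℝ (Fin d))) atTop)
    (hint : ∀ c > 0,
      Integrable (fun y => Real.exp (-c * f y)) ∧
      Integrable (fun y => ‖gradient f y‖ * Real.exp (-c * f y)) ∧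
      Integrable (fun y => ‖iteratedFDeriv ℝ 2 f y‖ * Real.exp (-c * f y)))
    (xstar : EuclideanSpace ℝ (Fin d))
    (hmin : ∀ y, f xstar ≤ f y)
    (huniq : ∀ y, f y = f xstar → y = xstar) :
    (∀ r > 0, ∃ C > 0, ∃ c > 0, ∃ lam₀ > 0, ∀ lam ∈ Set.Ioc (0:ℝ) lam₀,
      (∫ y in {y : EuclideanSpace ℝ (Fin d) | r ≤ ‖y - xstar‖}, gibbsDen T β lam f y)
        ≤ C * Real.exp (-c / lam)) ∧
    (∀ φ : EuclideanSpace ℝ (Fin d) → ℝ, Continuous φ → (∃ Cb, ∀ y, |φ y| ≤ Cb) →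
      Tendsto (fun lam : ℝ => ∫ y, φ y * gibbsDen T β lam f y) (𝓝[>] 0) (𝓝 (φ xstar))) := by
  have hfc : Continuous f := hf.continuous
  have hint1 : ∀ c > 0, Integrable (fun y => Real.exp (-c * f y)) := fun c hc => (hint c hc).1
  have part1 : ∀ r > 0, ∃ C > 0, ∃ c > 0, ∃ lam₀ > 0, ∀ lam ∈ Set.Ioc (0:ℝ) lam₀,
      (∫ y in {y : EuclideanSpace ℝ (Fin d) | r ≤ ‖y - xstar‖}, gibbsDen T β lam f y)
        ≤ C * Real.exp (-c / lam) :=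
    fun r hr => gibbs_tail T β hT hβ f hfc hcoer hint1 xstar hmin huniq r hr
  refine ⟨part1, ?_⟩
  rintro φ hφc ⟨Cb, hCb⟩
  have hCb0 : 0 ≤ Cb := le_trans (abs_nonneg _) (hCb xstar)
  rw [Metric.tendsto_nhds]
  intro ε hε
  -- radius from continuity of φ at xstar
  obtain ⟨r, hrpos, hr⟩ : ∃ r > 0, ∀ y ∈ Metric.ball xstar r, |φ y - φ xstar| < ε / 4 := by
    have h : ∀ᶠ y in 𝓝 xstar, |φ y - φ xstar| < ε / 4 := by
      have h2 := Metric.tendsto_nhds.mp (hφc.tendsto xstar) (ε / 4) (by positivity)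
      filter_upwards [h2] with y hy
      rwa [Real.dist_eq] at hy
    obtain ⟨r, hrpos, hr⟩ := Metric.nhds_basis_ball.eventually_iff.mp h
    exact ⟨r, hrpos, fun y hy => hr hy⟩
  obtain ⟨C, hC, c, hc, lam₀, hlam₀, htail⟩ := part1 r hrpos
  set S := {y : EuclideanSpace ℝ (Fin d) | r ≤ ‖y - xstar‖} with hSdef
  have hSm : MeasurableSet S :=
    (isClosed_le continuous_const ((continuous_id.sub continuous_const).norm)).measurableSet
  -- eventual facts on lam
  have hev1 : ∀ᶠ lam in 𝓝[>] (0:ℝ), lam ∈ Set.Ioc (0:ℝ) lam₀ :=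
    Ioc_mem_nhdsGT_of_mem ⟨le_refl 0, hlam₀⟩
  have hev2 : ∀ᶠ lam in 𝓝[>] (0:ℝ), 2 * Cb * (C * Real.exp (-c / lam)) < ε / 2 := by
    have h1 : Tendsto (fun lam : ℝ => c / lam) (𝓝[>] 0) atTop := by
      simpa [div_eq_mul_inv] using (tendsto_inv_nhdsGT_zero (𝕜 := ℝ)).const_mul_atTop hc
    have h2 : Tendsto (fun lam : ℝ => -c / lam) (𝓝[>] 0) atBot := by
      have h3 := tendsto_neg_atTop_atBot.comp h1
      simpa [Function.comp_def, neg_div] using h3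
    have h4 : Tendsto (fun lam : ℝ => 2 * Cb * (C * Real.exp (-c / lam))) (𝓝[>] 0) (𝓝 0) := by
      have h5 := Real.tendsto_exp_atBot.comp h2
      have h6 : Tendsto (fun lam : ℝ => Real.exp (-c / lam)) (𝓝[>] 0) (𝓝 0) := by
        simpa [Function.comp_def] using h5
      have h7 := (h6.const_mul C).const_mul (2 * Cb)
      simpa using h7
    exact h4.eventually_lt_const (by positivity)
  filter_upwards [hev1, hev2] with lam hmem h2
  obtain ⟨hl0, hl1⟩ := hmem
  have hαpos : 0 < T / (2 * lam * β) := by positivity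
  have hIα : Integrable (fun y => Real.exp (-(T / (2 * lam * β)) * f y)) := hint1 _ hαpos
  have hMpos : 0 < ∫ z, Real.exp (-(T / (2 * lam * β)) * f z) := exp_integral_pos hIα
  set g := gibbsDen T β lam f with hgdef
  have hint_g : Integrable g := hIα.div_const _
  have hg_nonneg : ∀ y, 0 ≤ g y := fun y => div_nonneg (Real.exp_pos _).le hMpos.le
  have hg_one : ∫ y, g y = 1 := by
    simp only [hgdef, gibbsDen]
    rw [integral_div, div_self hMpos.ne']
  have hφg : Integrable (fun y => φ y * g y) :=
    hint_g.bdd_mul hφc.aestronglyMeasurable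
      (Filter.Eventually.of_forall fun y => by rw [Real.norm_eq_abs]; exact hCb y)
  have hdiffInt : Integrable (fun y => (φ y - φ xstar) * g y) :=
    hint_g.bdd_mul (hφc.sub continuous_const).aestronglyMeasurable
      (Filter.Eventually.of_forall (fun y => show ‖φ y - φ xstar‖ ≤ 2 * Cb by
        rw [Real.norm_eq_abs]
        calc |φ y - φ xstar| ≤ |φ y| + |φ xstar| := abs_sub _ _
          _ ≤ 2 * Cb := by linarith [hCb y, hCb xstar]))
  have hdiff : (∫ y, φ y * g y) - φ xstar = ∫ y, (φ y - φ xstar) * g y := by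
    have h3 : ∫ y, (φ y - φ xstar) * g y = ∫ y, (φ y * g y - φ xstar * g y) := by
      congr 1; funext y; ring
    rw [h3, integral_sub hφg (hint_g.const_mul _), integral_const_mul, hg_one, mul_one]
  rw [Real.dist_eq, hdiff]
  -- bound the integral of the absolute value, split over S and Sᶜ
  have habs : Integrable (fun y => |(φ y - φ xstar) * g y|) := hdiffInt.abs
  have hS_bound : (∫ y in S, |(φ y - φ xstar) * g y|) ≤ 2 * Cb * (C * Real.exp (-c / lam)) := by
    have h3 : (∫ y in S, |(φ y - φ xstar) * g y|) ≤ ∫ y in S, 2 * Cb * g y := by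
      apply setIntegral_mono_on habs.integrableOn ((hint_g.const_mul _).integrableOn) hSm
      intro y hy
      rw [abs_mul, abs_of_nonneg (hg_nonneg y)]
      apply mul_le_mul_of_nonneg_right _ (hg_nonneg y)
      calc |φ y - φ xstar| ≤ |φ y| + |φ xstar| := abs_sub _ _
        _ ≤ 2 * Cb := by linarith [hCb y, hCb xstar]
    rw [integral_const_mul] at h3
    refine h3.trans ?_
    apply mul_le_mul_of_nonneg_left _ (by positivity)
    exact htail lam ⟨hl0, hl1⟩
  have hSc_bound : (∫ y in Sᶜ, |(φ y - φ xstar) * g y|) ≤ ε / 4 := by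
    have h3 : (∫ y in Sᶜ, |(φ y - φ xstar) * g y|) ≤ ∫ y in Sᶜ, ε / 4 * g y := by
      apply setIntegral_mono_on habs.integrableOn ((hint_g.const_mul _).integrableOn) hSm.compl
      intro y hy
      have hy' : ‖y - xstar‖ < r := not_le.mp hy
      have hball : y ∈ Metric.ball xstar r := by
        rw [Metric.mem_ball, dist_eq_norm]; exact hy'
      rw [abs_mul, abs_of_nonneg (hg_nonneg y)]
      exact mul_le_mul_of_nonneg_right (hr y hball).le (hg_nonneg y)
    rw [integral_const_mul] at h3
    refine h3.trans ?_
    have h4 : (∫ y in Sᶜ, g y) ≤ 1 := by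
      rw [← hg_one]
      exact setIntegral_le_integral hint_g (Filter.Eventually.of_forall hg_nonneg)
    calc ε / 4 * ∫ y in Sᶜ, g y ≤ ε / 4 * 1 := by
          apply mul_le_mul_of_nonneg_left h4 (by positivity)
      _ = ε / 4 := mul_one _
  calc |∫ y, (φ y - φ xstar) * g y| ≤ ∫ y, |(φ y - φ xstar) * g y| := by
        simpa only [Real.norm_eq_abs] using
          norm_integral_le_integral_norm (μ := volume) fun y => (φ y - φ xstar) * g y
    _ = (∫ y in S, |(φ y - φ xstar) * g y|) + ∫ y in Sᶜ, |(φ y - φ xstar) * g y| :=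
        (integral_add_compl hSm habs).symm
    _ ≤ 2 * Cb * (C * Real.exp (-c / lam)) + ε / 4 := add_le_add hS_bound hSc_bound
    _ < ε := by linarith
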